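/- arXiv:1209.5686 — 2 statements merged into one kernel-verified Lean document; each statement's English description precedes it below -/
import Mathlib

section
/- Let k be a field, A a commutative k-algebra and w ∈ A. Then on the bar modules A^{⊗(q+2)} (tensor powers over k) one has, for all q ≥ 0: (i) B_w ∘ B_w = 0, and (ii) b ∘ B_w + B_w ∘ b equals the map a₀⊗a₁⊗…⊗a_{q+1} ↦ (w·a₀)⊗a₁⊗…⊗a_{q+1} − a₀⊗a₁⊗…⊗(a_{q+1}·w). Consequently the completed bar complex with total differential ∂ = b + B_w satisfies ∂² = multiplication by w̃ = w⊗1 − 1⊗w through the outer two tensor factors, i.e. it is a w̃-curved module. -/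
open scoped TensorProduct
open PiTensorProduct

/-- The family obtained from `a : Fin (n+1) → A` by multiplying the `i`-th and `(i+1)`-st
entries together (the `i`-th term of the bar differential). -/
def mergeFam {A : Type*} [CommRing A] {n : ℕ} (a : Fin (n + 1) → A) (i : Fin n) :
    Fin n → A :=
  fun j =>
    if (j : ℕ) < (i : ℕ) then a j.castSucc
    else if (j : ℕ) = (i : ℕ) then a j.castSucc * a j.succ
    else a j.succ

/-- The family obtained from `a : Fin n → A` by inserting `w` between the `i`-th and
`(i+1)`-st entries (the `i`-th term of the insertion operator `B_w`). -/
def insWFam {A : Type*} [CommRing A] (w : A) {n : ℕ} (a : Fin n → A) (i : Fin (n - 1)) :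
    Fin (n + 1) → A :=
  fun j =>
    if h : (j : ℕ) ≤ (i : ℕ) then a ⟨j, by have hi := i.isLt; omega⟩
    else if h' : (j : ℕ) = (i : ℕ) + 1 then w
    else a ⟨(j : ℕ) - 1, by have hj := j.isLt; omega⟩

section Aux

variable {A : Type*} [CommRing A] (w : A)

set_option linter.unreachableTactic false
set_option linter.unusedTactic false
set_option linter.unnecessarySeqFocus false

lemma ins_ins_swap {n : ℕ} (a : Fin n → A) (x y : ℕ) (hyx : y < x) (hx : x < n)
    (hy : y < n - 1) (hx' : x - 1 < n - 1) (hy' : y < n + 1 - 1) :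
    insWFam w (insWFam w a ⟨x - 1, hx'⟩) (⟨y, hy'⟩ : Fin (n + 1 - 1))
      = insWFam w (insWFam w a ⟨y, hy⟩) (⟨x, by omega⟩ : Fin (n + 1 - 1)) := by
  funext p
  have hp := p.isLt
  simp only [insWFam, Fin.val_mk]
  split_ifs <;> first | rfl | omega

lemma merge_ins_lt {q : ℕ} (a : Fin (q + 2) → A) (i : Fin (q + 1)) (j : Fin (q + 2))
    (h : (j : ℕ) < (i : ℕ)) (h1 : (j : ℕ) < q + 1) (h2 : (i : ℕ) - 1 < q) :
    mergeFam (insWFam w a i) j = insWFam w (mergeFam a ⟨j, h1⟩) ⟨(i : ℕ) - 1, h2⟩ := by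
  have hi := i.isLt
  funext p
  have hp := p.isLt
  simp only [mergeFam, insWFam, Fin.coe_castSucc, Fin.val_succ, Fin.val_mk, Fin.succ_mk,
    Fin.castSucc_mk]
  split_ifs <;>
    first
      | rfl | omega
      | (congr 1 <;> (first | rfl | omega | (congr 1 <;> (first | rfl | omega | (simp only [Fin.mk.injEq]; omega))) | (simp only [Fin.mk.injEq]; omega)))
      | (rw [mul_comm]; congr 1 <;> (first | rfl | omega | (congr 1 <;> (first | rfl | omega | (simp only [Fin.mk.injEq]; omega))) | (simp only [Fin.mk.injEq]; omega)))

lemma merge_ins_gt {q : ℕ} (a : Fin (q + 2) → A) (i : Fin (q + 1)) (j : Fin (q + 2))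
    (h : (i : ℕ) + 1 < (j : ℕ)) (h1 : (j : ℕ) - 1 < q + 1) (h2 : (i : ℕ) < q) :
    mergeFam (insWFam w a i) j = insWFam w (mergeFam a ⟨(j : ℕ) - 1, h1⟩) ⟨(i : ℕ), h2⟩ := by
  have hi := i.isLt
  funext p
  have hp := p.isLt
  simp only [mergeFam, insWFam, Fin.coe_castSucc, Fin.val_succ, Fin.val_mk, Fin.succ_mk,
    Fin.castSucc_mk]
  split_ifs <;>
    first
      | rfl | omega
      | (congr 1 <;> (first | rfl | omega | (congr 1 <;> (first | rfl | omega | (simp only [Fin.mk.injEq]; omega))) | (simp only [Fin.mk.injEq]; omega)))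
      | (rw [mul_comm]; congr 1 <;> (first | rfl | omega | (congr 1 <;> (first | rfl | omega | (simp only [Fin.mk.injEq]; omega))) | (simp only [Fin.mk.injEq]; omega)))

lemma merge_ins_self {q : ℕ} (a : Fin (q + 2) → A) (i : Fin (q + 1)) (h : (i : ℕ) < q + 2) :
    mergeFam (insWFam w a i) ⟨(i : ℕ), h⟩ = Function.update a ⟨(i : ℕ), h⟩ (w * a ⟨(i : ℕ), h⟩) := by
  have hi := i.isLt
  funext p
  have hp := p.isLt
  rw [Function.update_apply]
  simp only [mergeFam, insWFam, Fin.coe_castSucc, Fin.val_succ, Fin.val_mk, Fin.succ_mk,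
    Fin.castSucc_mk, Fin.ext_iff]
  split_ifs <;>
    first
      | rfl | omega
      | (congr 1 <;> (first | rfl | omega | (congr 1 <;> (first | rfl | omega | (simp only [Fin.mk.injEq]; omega))) | (simp only [Fin.mk.injEq]; omega)))
      | (rw [mul_comm]; congr 1 <;> (first | rfl | omega | (congr 1 <;> (first | rfl | omega | (simp only [Fin.mk.injEq]; omega))) | (simp only [Fin.mk.injEq]; omega)))

lemma merge_ins_succ {q : ℕ} (a : Fin (q + 2) → A) (i : Fin (q + 1)) (h : (i : ℕ) + 1 < q + 2) :
    mergeFam (insWFam w a i) ⟨(i : ℕ) + 1, h⟩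
      = Function.update a ⟨(i : ℕ) + 1, h⟩ (w * a ⟨(i : ℕ) + 1, h⟩) := by
  have hi := i.isLt
  funext p
  have hp := p.isLt
  rw [Function.update_apply]
  simp only [mergeFam, insWFam, Fin.coe_castSucc, Fin.val_succ, Fin.val_mk, Fin.succ_mk,
    Fin.castSucc_mk, Fin.ext_iff]
  split_ifs <;>
    first
      | rfl | omega
      | (congr 1 <;> (first | rfl | omega | (congr 1 <;> (first | rfl | omega | (simp only [Fin.mk.injEq]; omega))) | (simp only [Fin.mk.injEq]; omega)))
      | (rw [mul_comm]; congr 1 <;> (first | rfl | omega | (congr 1 <;> (first | rfl | omega | (simp only [Fin.mk.injEq]; omega))) | (simp only [Fin.mk.injEq]; omega)))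

end Aux

/-- sign cancellation helper -/
lemma smul_pair_cancel {k M : Type*} [Field k] [AddCommGroup M] [Module k M]
    (x1 y1 x2 y2 : ℕ) (h : x2 + y2 = x1 + y1 + 1) (T S : M) (hTS : T = S) :
    ((-1 : k) ^ x1 * (-1 : k) ^ y1) • T + ((-1 : k) ^ x2 * (-1 : k) ^ y2) • S = 0 := by
  subst hTS
  rw [← pow_add, ← pow_add, h, pow_succ, mul_neg_one, neg_smul, add_neg_cancel]

lemma smul_pair_cancel₂ {k M : Type*} [Field k] [AddCommGroup M] [Module k M]
    (x1 y1 x2 y2 : ℕ) (h : x1 + y1 = x2 + y2 + 1) (T S : M) (hTS : T = S) :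
    ((-1 : k) ^ x1 * (-1 : k) ^ y1) • T + ((-1 : k) ^ x2 * (-1 : k) ^ y2) • S = 0 := by
  subst hTS
  rw [← pow_add, ← pow_add, h, pow_succ, mul_neg_one, neg_smul, neg_add_cancel]

lemma neg_one_pow_mul_self {k : Type*} [Field k] (m : ℕ) : ((-1 : k) ^ m * (-1 : k) ^ m) = 1 := by
  rw [← pow_add]
  exact Even.neg_one_pow ⟨m, rfl⟩

lemma neg_one_pow_mul_succ {k : Type*} [Field k] (m : ℕ) :
    ((-1 : k) ^ m * (-1 : k) ^ (m + 1)) = -1 := by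
  rw [← pow_add]
  exact Odd.neg_one_pow ⟨m, by ring⟩

/-- involution for `B ∘ B = 0` -/
def swapIns {n : ℕ} : Fin (n - 1) × Fin (n + 1 - 1) → Fin (n - 1) × Fin (n + 1 - 1) := fun p =>
  if h : (p.2 : ℕ) ≤ (p.1 : ℕ) then
    (⟨p.2, by have := p.1.isLt; have := p.2.isLt; omega⟩,
     ⟨(p.1 : ℕ) + 1, by have := p.1.isLt; omega⟩)
  else
    (⟨(p.2 : ℕ) - 1, by have := p.1.isLt; have := p.2.isLt; omega⟩,
     ⟨p.1, by have := p.1.isLt; omega⟩)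

/-- involution for the curvature computation -/
def pairMap {q : ℕ} :
    (Fin (q + 2 - 1) × Fin (q + 2)) ⊕ (Fin (q + 1) × Fin (q + 1 - 1)) →
      (Fin (q + 2 - 1) × Fin (q + 2)) ⊕ (Fin (q + 1) × Fin (q + 1 - 1))
  | Sum.inl p =>
    if h1 : (p.2 : ℕ) < (p.1 : ℕ) then
      Sum.inr (⟨p.2, by have := p.1.isLt; have := p.2.isLt; omega⟩,
        ⟨(p.1 : ℕ) - 1, by have := p.1.isLt; omega⟩)
    else if h2 : (p.1 : ℕ) + 1 < (p.2 : ℕ) then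
      Sum.inr (⟨(p.2 : ℕ) - 1, by have := p.2.isLt; omega⟩,
        ⟨p.1, by have := p.1.isLt; have := p.2.isLt; omega⟩)
    else Sum.inl p
  | Sum.inr p =>
    if h : (p.1 : ℕ) ≤ (p.2 : ℕ) then
      Sum.inl (⟨(p.2 : ℕ) + 1, by have := p.2.isLt; omega⟩,
        ⟨p.1, by have := p.1.isLt; omega⟩)
    else
      Sum.inl (⟨p.2, by have := p.2.isLt; omega⟩,
        ⟨(p.1 : ℕ) + 1, by have := p.1.isLt; omega⟩)

/-- diagonal term: `a` with `w` multiplied into the `m`-th slot -/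
noncomputable def diagT {k A : Type*} [Field k] [CommRing A] [Algebra k A] (w : A) {q : ℕ}
    (a : Fin (q + 2) → A) (m : ℕ) : ⨂[k] (_ : Fin (q + 2)), A :=
  if h : m < q + 2 then tprod k (Function.update a ⟨m, h⟩ (w * a ⟨m, h⟩)) else 0

/-- On the bar modules `A^{⊗(q+2)}` (tensor powers over the field `k`),
the insertion operator `B_w` squares to zero, and `b ∘ B_w + B_w ∘ b` is the map
`a₀⊗a₁⊗⋯⊗a_{q+1} ↦ (w·a₀)⊗a₁⊗⋯⊗a_{q+1} − a₀⊗a₁⊗⋯⊗(a_{q+1}·w)`; consequently the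
completed bar complex with total differential `∂ = b + B_w` is a `w̃`-curved module. -/
theorem stmt_7 {k A : Type*} [Field k] [CommRing A] [Algebra k A] (w : A)
    (b : ∀ n : ℕ, (⨂[k] (_ : Fin (n + 1)), A) →ₗ[k] ⨂[k] (_ : Fin n), A)
    (B : ∀ n : ℕ, (⨂[k] (_ : Fin n), A) →ₗ[k] ⨂[k] (_ : Fin (n + 1)), A)
    (hb : ∀ (n : ℕ) (a : Fin (n + 1) → A),
      b n (tprod k a) = ∑ i : Fin n, ((-1 : k) ^ (i : ℕ)) • tprod k (mergeFam a i))
    (hB : ∀ (n : ℕ) (a : Fin n → A),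
      B n (tprod k a) = ∑ i : Fin (n - 1), ((-1 : k) ^ (i : ℕ)) • tprod k (insWFam w a i)) :
    (∀ n : ℕ, B (n + 1) ∘ₗ B n = 0) ∧
    (∀ (q : ℕ) (a : Fin (q + 2) → A),
      b (q + 2) (B (q + 2) (tprod k a)) + B (q + 1) (b (q + 1) (tprod k a))
        = tprod k (Function.update a 0 (w * a 0))
          - tprod k (Function.update a (Fin.last (q + 1)) (a (Fin.last (q + 1)) * w))) := by
  constructor
  · -- part (i)
    intro n
    apply PiTensorProduct.ext
    apply MultilinearMap.ext
    intro a
    simp only [LinearMap.compMultilinearMap_apply, LinearMap.comp_apply,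
      LinearMap.zero_comp, LinearMap.zero_apply]
    have h1 : B (n + 1) (B n (tprod k a))
        = ∑ i : Fin (n - 1), ∑ j : Fin (n + 1 - 1),
            ((-1 : k) ^ (i : ℕ) * (-1 : k) ^ (j : ℕ))
              • tprod k (insWFam w (insWFam w a i) j) := by
      rw [hB n a, map_sum]
      refine Finset.sum_congr rfl fun i _ => ?_
      rw [map_smul, hB (n + 1) (insWFam w a i), Finset.smul_sum]
      refine Finset.sum_congr rfl fun j _ => ?_
      rw [smul_smul]
    rw [h1, ← Finset.sum_product']
    refine Finset.sum_ninvolution swapIns ?_ ?_ (fun p => Finset.mem_univ _) ?_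
    · intro p
      by_cases h : (p.2 : ℕ) ≤ (p.1 : ℕ)
      · simp only [swapIns, dif_pos h]
        exact smul_pair_cancel _ _ _ _ (by omega) _ _
          (congrArg ⇑(PiTensorProduct.tprod k)
            (ins_ins_swap w a ((p.1 : ℕ) + 1) (p.2 : ℕ) (by omega)
              (by have := p.1.isLt; omega) (by have := p.1.isLt; have := p.2.isLt; omega)
              (by have := p.1.isLt; omega) (by have := p.2.isLt; omega)))
      · simp only [swapIns, dif_neg h]
        have key := ins_ins_swap w a (p.2 : ℕ) (p.1 : ℕ) (by omega)
          (by have := p.2.isLt; omega) (by have := p.1.isLt; have := p.2.isLt; omega)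
          (by have := p.1.isLt; have := p.2.isLt; omega) (by have := p.1.isLt; omega)
        exact smul_pair_cancel₂ _ _ _ _
          (by have := p.1.isLt; have := p.2.isLt; omega) _ _ (congrArg ⇑(PiTensorProduct.tprod k) key.symm)
    · intro p _ hq
      rw [Prod.ext_iff] at hq
      by_cases h : (p.2 : ℕ) ≤ (p.1 : ℕ)
      · simp only [swapIns, dif_pos h] at hq
        have h2 := congrArg Fin.val hq.2
        simp only [Fin.val_mk] at h2
        omega
      · simp only [swapIns, dif_neg h] at hq
        have h2 := congrArg Fin.val hq.2
        simp only [Fin.val_mk] at h2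
        omega
    · intro p
      have hp1 := p.1.isLt
      have hp2 := p.2.isLt
      by_cases h : (p.2 : ℕ) ≤ (p.1 : ℕ)
      · have : ¬ ((((⟨(p.1 : ℕ) + 1, by omega⟩ : Fin (n + 1 - 1))) : ℕ)
            ≤ ((⟨(p.2 : ℕ), by omega⟩ : Fin (n - 1)) : ℕ)) := by simp; omega
        simp only [swapIns, dif_pos h, dif_neg this]
        apply Prod.ext <;> apply Fin.ext <;> simp
      · have : ((((⟨(p.1 : ℕ), by omega⟩ : Fin (n + 1 - 1))) : ℕ)
            ≤ ((⟨(p.2 : ℕ) - 1, by omega⟩ : Fin (n - 1)) : ℕ)) := by simp; omega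
        simp only [swapIns, dif_neg h, dif_pos this]
        apply Prod.ext <;> apply Fin.ext <;> simp <;> omega
  · -- part (ii)
    intro q a
    have h1 : b (q + 2) (B (q + 2) (tprod k a))
        = ∑ i : Fin (q + 2 - 1), ∑ j : Fin (q + 2),
            ((-1 : k) ^ (i : ℕ) * (-1 : k) ^ (j : ℕ))
              • tprod k (mergeFam (insWFam w a i) j) := by
      rw [hB (q + 2) a, map_sum]
      refine Finset.sum_congr rfl fun i _ => ?_
      rw [map_smul, hb (q + 2) (insWFam w a i), Finset.smul_sum]
      exact Finset.sum_congr rfl fun j _ => smul_smul _ _ _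
    have h2 : B (q + 1) (b (q + 1) (tprod k a))
        = ∑ j : Fin (q + 1), ∑ i : Fin (q + 1 - 1),
            ((-1 : k) ^ (j : ℕ) * (-1 : k) ^ (i : ℕ))
              • tprod k (insWFam w (mergeFam a j) i) := by
      rw [hb (q + 1) a, map_sum]
      refine Finset.sum_congr rfl fun j _ => ?_
      rw [map_smul, hB (q + 1) (mergeFam a j), Finset.smul_sum]
      exact Finset.sum_congr rfl fun i _ => smul_smul _ _ _
    have hsplit : ∀ i : Fin (q + 2 - 1),
        (∑ j : Fin (q + 2), ((-1 : k) ^ (i : ℕ) * (-1 : k) ^ (j : ℕ))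
            • tprod k (mergeFam (insWFam w a i) j))
          = (∑ j : Fin (q + 2),
              (if (j : ℕ) ≠ (i : ℕ) ∧ (j : ℕ) ≠ (i : ℕ) + 1 then
                ((-1 : k) ^ (i : ℕ) * (-1 : k) ^ (j : ℕ))
                  • tprod k (mergeFam (insWFam w a i) j) else 0))
            + (diagT w a (i : ℕ) - diagT w a ((i : ℕ) + 1)) := by
      intro i
      have hiq := i.isLt
      have e1 : ∀ j : Fin (q + 2),
          ((-1 : k) ^ (i : ℕ) * (-1 : k) ^ (j : ℕ)) • tprod k (mergeFam (insWFam w a i) j)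
            = (if (j : ℕ) ≠ (i : ℕ) ∧ (j : ℕ) ≠ (i : ℕ) + 1 then
                ((-1 : k) ^ (i : ℕ) * (-1 : k) ^ (j : ℕ))
                  • tprod k (mergeFam (insWFam w a i) j) else 0)
              + (if (j : ℕ) = (i : ℕ) then
                ((-1 : k) ^ (i : ℕ) * (-1 : k) ^ (j : ℕ))
                  • tprod k (mergeFam (insWFam w a i) j) else 0)
              + (if (j : ℕ) = (i : ℕ) + 1 then
                ((-1 : k) ^ (i : ℕ) * (-1 : k) ^ (j : ℕ))
                  • tprod k (mergeFam (insWFam w a i) j) else 0) := by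
        intro j
        by_cases hj1 : (j : ℕ) = (i : ℕ)
        · rw [if_neg (fun hc => hc.1 hj1), if_pos hj1, if_neg (by omega), zero_add, add_zero]
        · by_cases hj2 : (j : ℕ) = (i : ℕ) + 1
          · rw [if_neg (fun hc => hc.2 hj2), if_neg hj1, if_pos hj2, zero_add, zero_add]
          · rw [if_pos ⟨hj1, hj2⟩, if_neg hj1, if_neg hj2, add_zero, add_zero]
      have s_i : (∑ j : Fin (q + 2), (if (j : ℕ) = (i : ℕ) then
            ((-1 : k) ^ (i : ℕ) * (-1 : k) ^ (j : ℕ))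
              • tprod k (mergeFam (insWFam w a i) j) else 0)) = diagT w a (i : ℕ) := by
        rw [Finset.sum_eq_single_of_mem (⟨(i : ℕ), by omega⟩ : Fin (q + 2))
          (Finset.mem_univ _) (fun j _ hne => if_neg (fun hval => hne (Fin.ext hval)))]
        rw [if_pos rfl]
        simp only [Fin.val_mk]
        rw [neg_one_pow_mul_self, one_smul, merge_ins_self w a i (by omega)]
        simp only [diagT]
        rw [dif_pos (show (i : ℕ) < q + 2 by omega)]
      have s_i1 : (∑ j : Fin (q + 2), (if (j : ℕ) = (i : ℕ) + 1 then
            ((-1 : k) ^ (i : ℕ) * (-1 : k) ^ (j : ℕ))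
              • tprod k (mergeFam (insWFam w a i) j) else 0)) = - diagT w a ((i : ℕ) + 1) := by
        rw [Finset.sum_eq_single_of_mem (⟨(i : ℕ) + 1, by omega⟩ : Fin (q + 2))
          (Finset.mem_univ _) (fun j _ hne => if_neg (fun hval => hne (Fin.ext hval)))]
        rw [if_pos rfl]
        simp only [Fin.val_mk]
        rw [neg_one_pow_mul_succ, neg_one_smul, merge_ins_succ w a i (by omega)]
        simp only [diagT]
        rw [dif_pos (show (i : ℕ) + 1 < q + 2 by omega)]
      rw [Finset.sum_congr rfl (fun j _ => e1 j), Finset.sum_add_distrib,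
        Finset.sum_add_distrib, s_i, s_i1]
      abel
    have htel : (∑ i : Fin (q + 2 - 1), (diagT w a (i : ℕ) - diagT w a ((i : ℕ) + 1)))
        = tprod k (Function.update a 0 (w * a 0))
          - tprod k (Function.update a (Fin.last (q + 1)) (a (Fin.last (q + 1)) * w)) := by
      rw [Fin.sum_univ_eq_sum_range (fun m => diagT w a m - diagT w a (m + 1)) (q + 2 - 1),
        Finset.sum_range_sub' (fun m => diagT w a m) (q + 2 - 1)]
      have e0 : ∀ h : (0 : ℕ) < q + 2, (⟨0, h⟩ : Fin (q + 2)) = 0 :=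
        fun h => Fin.ext (by simp)
      have elast : ∀ h : q + 2 - 1 < q + 2, (⟨q + 2 - 1, h⟩ : Fin (q + 2)) = Fin.last (q + 1) :=
        fun h => Fin.ext (by simp [Fin.last])
      simp only [diagT]
      rw [dif_pos (show (0 : ℕ) < q + 2 by omega), dif_pos (show q + 2 - 1 < q + 2 by omega)]
      rw [e0, elast, mul_comm w (a (Fin.last (q + 1)))]
    -- cancellation of the off-diagonal part against the second sum
    have hcancel :
        (∑ i : Fin (q + 2 - 1), ∑ j : Fin (q + 2),
            (if (j : ℕ) ≠ (i : ℕ) ∧ (j : ℕ) ≠ (i : ℕ) + 1 then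
              ((-1 : k) ^ (i : ℕ) * (-1 : k) ^ (j : ℕ))
                • tprod k (mergeFam (insWFam w a i) j) else 0))
          + (∑ j : Fin (q + 1), ∑ i : Fin (q + 1 - 1),
              ((-1 : k) ^ (j : ℕ) * (-1 : k) ^ (i : ℕ))
                • tprod k (insWFam w (mergeFam a j) i)) = 0 := by
      set Φ : (Fin (q + 2 - 1) × Fin (q + 2)) ⊕ (Fin (q + 1) × Fin (q + 1 - 1))
          → ⨂[k] (_ : Fin (q + 2)), A :=
        Sum.elim
          (fun p => if (p.2 : ℕ) ≠ (p.1 : ℕ) ∧ (p.2 : ℕ) ≠ (p.1 : ℕ) + 1 then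
            ((-1 : k) ^ (p.1 : ℕ) * (-1 : k) ^ (p.2 : ℕ))
              • tprod k (mergeFam (insWFam w a p.1) p.2) else 0)
          (fun p => ((-1 : k) ^ (p.1 : ℕ) * (-1 : k) ^ (p.2 : ℕ))
              • tprod k (insWFam w (mergeFam a p.1) p.2)) with hΦ
      have key : (∑ x : (Fin (q + 2 - 1) × Fin (q + 2)) ⊕ (Fin (q + 1) × Fin (q + 1 - 1)), Φ x)
          = 0 := by
        refine Finset.sum_ninvolution pairMap ?_ ?_ (fun x => Finset.mem_univ _) ?_
        · -- Φ x + Φ (pairMap x) = 0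
          rintro (p | p)
          · have hp1 := p.1.isLt
            have hp2 := p.2.isLt
            by_cases hl : (p.2 : ℕ) < (p.1 : ℕ)
            · simp only [pairMap, dif_pos hl, hΦ, Sum.elim_inl, Sum.elim_inr]
              rw [if_pos (by omega)]
              exact smul_pair_cancel₂ _ _ _ _ (by omega) _ _
                (congrArg ⇑(PiTensorProduct.tprod k)
                  (merge_ins_lt w a p.1 p.2 hl (by omega) (by omega)))
            · by_cases hg : (p.1 : ℕ) + 1 < (p.2 : ℕ)
              · simp only [pairMap, dif_neg hl, dif_pos hg, hΦ, Sum.elim_inl, Sum.elim_inr]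
                rw [if_pos (by omega)]
                exact smul_pair_cancel₂ _ _ _ _ (by omega) _ _
                  (congrArg ⇑(PiTensorProduct.tprod k)
                    (merge_ins_gt w a p.1 p.2 hg (by omega) (by omega)))
              · simp only [pairMap, dif_neg hl, dif_neg hg, hΦ, Sum.elim_inl]
                rw [if_neg (by omega), add_zero]
          · have hp1 := p.1.isLt
            have hp2 := p.2.isLt
            by_cases h : (p.1 : ℕ) ≤ (p.2 : ℕ)
            · simp only [pairMap, dif_pos h, hΦ, Sum.elim_inl, Sum.elim_inr]
              rw [if_pos (by constructor <;> (first | omega | (simp only [Fin.val_mk]; omega) | (simp; omega) | simp))]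
              exact smul_pair_cancel _ _ _ _ (by first | omega | (simp only [Fin.val_mk]; omega) | (simp; omega) | simp) _ _
                (congrArg ⇑(PiTensorProduct.tprod k)
                  (merge_ins_lt w a ⟨(p.2 : ℕ) + 1, by omega⟩ ⟨(p.1 : ℕ), by omega⟩
                    (by first | omega | (simp only [Fin.val_mk]; omega) | (simp; omega) | simp) (by first | omega | (simp only [Fin.val_mk]; omega) | (simp; omega) | simp) (by first | omega | (simp only [Fin.val_mk]; omega) | (simp; omega) | simp))).symm
            · simp only [pairMap, dif_neg h, hΦ, Sum.elim_inl, Sum.elim_inr]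
              rw [if_pos (by constructor <;> (first | omega | (simp only [Fin.val_mk]; omega) | (simp; omega) | simp))]
              exact smul_pair_cancel _ _ _ _ (by first | omega | (simp only [Fin.val_mk]; omega) | (simp; omega) | simp) _ _
                (congrArg ⇑(PiTensorProduct.tprod k)
                  (merge_ins_gt w a ⟨(p.2 : ℕ), by omega⟩ ⟨(p.1 : ℕ) + 1, by omega⟩
                    (by first | omega | (simp only [Fin.val_mk]; omega) | (simp; omega) | simp) (by first | omega | (simp only [Fin.val_mk]; omega) | (simp; omega) | simp) (by first | omega | (simp only [Fin.val_mk]; omega) | (simp; omega) | simp))).symm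
        · -- Φ x ≠ 0 → pairMap x ≠ x
          rintro (p | p) hx
          · by_cases hl : (p.2 : ℕ) < (p.1 : ℕ)
            · simp only [pairMap, dif_pos hl]
              exact fun hEq => nomatch hEq
            · by_cases hg : (p.1 : ℕ) + 1 < (p.2 : ℕ)
              · simp only [pairMap, dif_neg hl, dif_pos hg]
                exact fun hEq => nomatch hEq
              · exfalso
                apply hx
                simp only [hΦ, Sum.elim_inl]
                rw [if_neg (by omega)]
          · by_cases h : (p.1 : ℕ) ≤ (p.2 : ℕ)
            · simp only [pairMap, dif_pos h]
              exact fun hEq => nomatch hEq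
            · simp only [pairMap, dif_neg h]
              exact fun hEq => nomatch hEq
        · -- pairMap ∘ pairMap = id
          rintro (p | p)
          · have hp1 := p.1.isLt
            have hp2 := p.2.isLt
            by_cases hl : (p.2 : ℕ) < (p.1 : ℕ)
            · rw [show pairMap (Sum.inl p) = Sum.inr
                  (⟨(p.2 : ℕ), by omega⟩, ⟨(p.1 : ℕ) - 1, by omega⟩) from by
                simp only [pairMap, dif_pos hl]]
              simp only [pairMap]
              rw [dif_pos (by first | omega | (simp only [Fin.val_mk]; omega) | (simp; omega) | simp)]
              refine congrArg Sum.inl (Prod.ext (Fin.ext ?_) (Fin.ext ?_)) <;> (first | omega | (simp only [Fin.val_mk]; omega) | (simp; omega) | simp)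
            · by_cases hg : (p.1 : ℕ) + 1 < (p.2 : ℕ)
              · rw [show pairMap (Sum.inl p) = Sum.inr
                    (⟨(p.2 : ℕ) - 1, by omega⟩, ⟨(p.1 : ℕ), by omega⟩) from by
                  simp only [pairMap, dif_neg hl, dif_pos hg]]
                simp only [pairMap]
                rw [dif_neg (by first | omega | (simp only [Fin.val_mk]; omega) | (simp; omega) | simp)]
                refine congrArg Sum.inl (Prod.ext (Fin.ext ?_) (Fin.ext ?_)) <;> (first | omega | (simp only [Fin.val_mk]; omega) | (simp; omega) | simp)
              · simp only [pairMap, dif_neg hl, dif_neg hg]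
          · have hp1 := p.1.isLt
            have hp2 := p.2.isLt
            by_cases h : (p.1 : ℕ) ≤ (p.2 : ℕ)
            · rw [show pairMap (Sum.inr p) = Sum.inl
                  (⟨(p.2 : ℕ) + 1, by omega⟩, ⟨(p.1 : ℕ), by omega⟩) from by
                simp only [pairMap, dif_pos h]]
              simp only [pairMap]
              rw [dif_pos (by first | omega | (simp only [Fin.val_mk]; omega) | (simp; omega) | simp)]
              refine congrArg Sum.inr (Prod.ext (Fin.ext ?_) (Fin.ext ?_)) <;> (first | omega | (simp only [Fin.val_mk]; omega) | (simp; omega) | simp)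
            · rw [show pairMap (Sum.inr p) = Sum.inl
                  (⟨(p.2 : ℕ), by omega⟩, ⟨(p.1 : ℕ) + 1, by omega⟩) from by
                simp only [pairMap, dif_neg h]]
              simp only [pairMap]
              rw [dif_neg (by first | omega | (simp only [Fin.val_mk]; omega) | (simp; omega) | simp), dif_pos (by first | omega | (simp only [Fin.val_mk]; omega) | (simp; omega) | simp)]
              refine congrArg Sum.inr (Prod.ext (Fin.ext ?_) (Fin.ext ?_)) <;> (first | omega | (simp only [Fin.val_mk]; omega) | (simp; omega) | simp)
      calc (∑ i : Fin (q + 2 - 1), ∑ j : Fin (q + 2),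
            (if (j : ℕ) ≠ (i : ℕ) ∧ (j : ℕ) ≠ (i : ℕ) + 1 then
              ((-1 : k) ^ (i : ℕ) * (-1 : k) ^ (j : ℕ))
                • tprod k (mergeFam (insWFam w a i) j) else 0))
          + (∑ j : Fin (q + 1), ∑ i : Fin (q + 1 - 1),
              ((-1 : k) ^ (j : ℕ) * (-1 : k) ^ (i : ℕ))
                • tprod k (insWFam w (mergeFam a j) i))
          = (∑ p : Fin (q + 2 - 1) × Fin (q + 2), Φ (Sum.inl p))
            + (∑ p : Fin (q + 1) × Fin (q + 1 - 1), Φ (Sum.inr p)) := by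
            rw [Fintype.sum_prod_type, Fintype.sum_prod_type]
            simp only [hΦ, Sum.elim_inl, Sum.elim_inr]
        _ = ∑ x : (Fin (q + 2 - 1) × Fin (q + 2)) ⊕ (Fin (q + 1) × Fin (q + 1 - 1)), Φ x :=
            (Fintype.sum_sum_type Φ).symm
        _ = 0 := key
    rw [h1, h2, Finset.sum_congr rfl (fun i _ => hsplit i), Finset.sum_add_distrib, htel,
      add_right_comm, hcancel, zero_add]
end

section
/- With A, w, I, J¹, Ω, m, γ, B_{dw} as in the context: for every q ≥ 0, on Ω^{⊗q} ⊗_A J¹ one has −(B_{dw} ∘ m ∘ γ + m ∘ γ ∘ B_{dw})(x) = x·(class of w⊗1 − 1⊗w), the product taken through the J¹ factor in the commutative ring J¹ = (A⊗_k A)/I². Equivalently, the folded Atiyah complex built from the modules Ω^{⊗q} ⊗_A J¹ with total differential B_{dw} − m∘γ squares to multiplication by w̃ = w⊗1 − 1⊗w, i.e. is a w̃-curved module. -/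
set_option maxHeartbeats 1000000
set_option synthInstance.maxHeartbeats 400000

open scoped TensorProduct
open PiTensorProduct

/-- Let `I = ker(A ⊗_k A → A)`, `J¹ = (A ⊗_k A)/I²`, and consider the
folded Atiyah complex with components `Ω^{⊗q} ⊗_A J¹`, where `m` is induced by the
multiplication `J¹ → A` followed by `Ω ≅ I/I² ↪ J¹` in the last slot, and `B_{dw}` inserts
`dw` with alternating signs.  Then `−(B_{dw} ∘ m ∘ γ + m ∘ γ ∘ B_{dw})(x) = x · [w⊗1 − 1⊗w]`
(the product taken through the `J¹` factor), i.e. the total differential `B_{dw} − m∘γ`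
squares to multiplication by `w̃`, so the folded Atiyah complex is a `w̃`-curved module.
Equivalently, `(−1)^q (m (B_{dw} x) − B_{dw} (m x)) = x · [w⊗1 − 1⊗w]` on `Ω^{⊗q} ⊗_A J¹`
(with `m := 0` for `q = 0`), which is what is stated below, separately for `q = 0` and
for `q + 1`. -/
theorem stmt_9 {k A : Type*} [Field k] [CommRing A] [Algebra k A] (w : A)
    (ι : Ω[A⁄k] →ₗ[A] ((A ⊗[k] A) ⧸ (KaehlerDifferential.ideal k A ^ 2)))
    (hι : ∀ a : A,
      ι (KaehlerDifferential.D k A a)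
        = Ideal.Quotient.mk (KaehlerDifferential.ideal k A ^ 2)
            (a ⊗ₜ[k] (1 : A) - (1 : A) ⊗ₜ[k] a))
    (μ : ((A ⊗[k] A) ⧸ (KaehlerDifferential.ideal k A ^ 2)) →ₗ[A] A)
    (hμ : ∀ x y : A,
      μ (Ideal.Quotient.mk (KaehlerDifferential.ideal k A ^ 2) (x ⊗ₜ[k] y)) = x * y)
    (m : ∀ q : ℕ,
      ((⨂[A] (_ : Fin (q + 1)), Ω[A⁄k]) ⊗[A]
          ((A ⊗[k] A) ⧸ (KaehlerDifferential.ideal k A ^ 2))) →ₗ[A]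
        ((⨂[A] (_ : Fin q), Ω[A⁄k]) ⊗[A]
          ((A ⊗[k] A) ⧸ (KaehlerDifferential.ideal k A ^ 2))))
    (hm : ∀ (q : ℕ) (ω : Fin (q + 1) → Ω[A⁄k])
        (ξ : (A ⊗[k] A) ⧸ (KaehlerDifferential.ideal k A ^ 2)),
      m q ((tprod A ω) ⊗ₜ[A] ξ)
        = μ ξ • ((tprod A (fun i : Fin q => ω i.castSucc)) ⊗ₜ[A] ι (ω (Fin.last q))))
    (B : ∀ q : ℕ,
      ((⨂[A] (_ : Fin q), Ω[A⁄k]) ⊗[A]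
          ((A ⊗[k] A) ⧸ (KaehlerDifferential.ideal k A ^ 2))) →ₗ[A]
        ((⨂[A] (_ : Fin (q + 1)), Ω[A⁄k]) ⊗[A]
          ((A ⊗[k] A) ⧸ (KaehlerDifferential.ideal k A ^ 2))))
    (hB : ∀ (q : ℕ) (ω : Fin q → Ω[A⁄k])
        (ξ : (A ⊗[k] A) ⧸ (KaehlerDifferential.ideal k A ^ 2)),
      B q ((tprod A ω) ⊗ₜ[A] ξ)
        = ∑ i : Fin (q + 1), ((-1 : A) ^ (i : ℕ)) •
            ((PiTensorProduct.tprod A (i.insertNth (KaehlerDifferential.D k A w) ω)) ⊗ₜ[A] ξ)) :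
    (∀ ξ : (A ⊗[k] A) ⧸ (KaehlerDifferential.ideal k A ^ 2),
      m 0 (B 0 ((tprod A (fun i : Fin 0 => i.elim0)) ⊗ₜ[A] ξ))
        = (PiTensorProduct.tprod A (fun i : Fin 0 => i.elim0)) ⊗ₜ[A]
            (ξ * Ideal.Quotient.mk (KaehlerDifferential.ideal k A ^ 2)
              (w ⊗ₜ[k] (1 : A) - (1 : A) ⊗ₜ[k] w))) ∧
    (∀ (q : ℕ) (ω : Fin (q + 1) → Ω[A⁄k])
        (ξ : (A ⊗[k] A) ⧸ (KaehlerDifferential.ideal k A ^ 2)),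
      ((-1 : A) ^ (q + 1)) •
          (m (q + 1) (B (q + 1) ((tprod A ω) ⊗ₜ[A] ξ))
            - B q (m q ((tprod A ω) ⊗ₜ[A] ξ)))
        = (tprod A ω) ⊗ₜ[A]
            (ξ * Ideal.Quotient.mk (KaehlerDifferential.ideal k A ^ 2)
              (w ⊗ₜ[k] (1 : A) - (1 : A) ⊗ₜ[k] w))) := by
  set dw := KaehlerDifferential.D k A w with hdw
  have hwmem : (w ⊗ₜ[k] (1 : A) - (1 : A) ⊗ₜ[k] w) ∈ KaehlerDifferential.ideal k A := by
    simp [RingHom.mem_ker]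
  have key : ∀ ξ : (A ⊗[k] A) ⧸ (KaehlerDifferential.ideal k A ^ 2),
      ξ * Ideal.Quotient.mk (KaehlerDifferential.ideal k A ^ 2)
            (w ⊗ₜ[k] (1 : A) - (1 : A) ⊗ₜ[k] w)
        = μ ξ • Ideal.Quotient.mk (KaehlerDifferential.ideal k A ^ 2)
            (w ⊗ₜ[k] (1 : A) - (1 : A) ⊗ₜ[k] w) := by
    intro ξ
    obtain ⟨η, rfl⟩ := Ideal.Quotient.mk_surjective (I := KaehlerDifferential.ideal k A ^ 2) ξ
    induction η using TensorProduct.induction_on with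
    | zero => simp
    | tmul x y =>
        rw [hμ, Algebra.smul_def,
          IsScalarTower.algebraMap_apply A (A ⊗[k] A)
            ((A ⊗[k] A) ⧸ (KaehlerDifferential.ideal k A ^ 2)),
          Ideal.Quotient.algebraMap_eq, ← _root_.map_mul, ← _root_.map_mul,
          Ideal.Quotient.eq]
        have h1 : x ⊗ₜ[k] y - (algebraMap A (A ⊗[k] A)) (x * y)
            ∈ KaehlerDifferential.ideal k A := by
          simp [RingHom.mem_ker]
        rw [← sub_mul, pow_two]
        exact Ideal.mul_mem_mul h1 hwmem
    | add a b ha hb =>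
        rw [_root_.map_add, _root_.map_add, add_mul, ha, hb]
        exact (add_smul _ _ _).symm
  have hfin : ∀ {n : ℕ} (τ : Fin n → Ω[A⁄k])
      (ξ : (A ⊗[k] A) ⧸ (KaehlerDifferential.ideal k A ^ 2)),
      μ ξ • ((tprod A τ) ⊗ₜ[A] ι dw)
        = (tprod A τ) ⊗ₜ[A]
            (ξ * Ideal.Quotient.mk (KaehlerDifferential.ideal k A ^ 2)
              (w ⊗ₜ[k] (1 : A) - (1 : A) ⊗ₜ[k] w)) := by
    intro n τ ξ
    rw [key, hdw, hι, ← TensorProduct.tmul_smul]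
  refine ⟨?_, ?_⟩
  · intro ξ
    have h0 : (0 : Fin 1) = Fin.last 0 := Subsingleton.elim _ _
    rw [hB, Fin.sum_univ_one, h0]
    simp only [Fin.val_last, pow_zero, one_smul]
    rw [hm]
    have h1 : (Fin.insertNth (α := fun _ => Ω[A⁄k]) (Fin.last 0) dw
          (fun i : Fin 0 => i.elim0)) (Fin.last 0) = dw :=
      Fin.insertNth_apply_same _ _ _
    have h2 : (fun i : Fin 0 => (Fin.insertNth (α := fun _ => Ω[A⁄k]) (Fin.last 0) dw
          (fun i : Fin 0 => i.elim0)) i.castSucc)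
        = (fun i : Fin 0 => i.elim0) := funext fun i => i.elim0
    rw [h1, h2, hfin]
  · intro q ω ξ
    have hrest : ∀ j : Fin (q + 1),
        (fun r : Fin (q + 1) =>
          (Fin.insertNth (α := fun _ => Ω[A⁄k]) j.castSucc dw ω) r.castSucc)
          = Fin.insertNth (α := fun _ => Ω[A⁄k]) j dw (fun r : Fin q => ω r.castSucc) := by
      intro j; funext r
      rcases eq_or_ne r j with rfl | h
      · simp
      · obtain ⟨s, rfl⟩ := Fin.exists_succAbove_eq h
        rw [Fin.insertNth_apply_succAbove]
        show (Fin.insertNth (α := fun _ => Ω[A⁄k]) j.castSucc dw ω)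
            (j.succAbove s).castSucc = ω s.castSucc
        rw [← Fin.castSucc_succAbove_castSucc, Fin.insertNth_apply_succAbove]
    have hlast : ∀ j : Fin (q + 1),
        (Fin.insertNth (α := fun _ => Ω[A⁄k]) j.castSucc dw ω) (Fin.last (q + 1))
          = ω (Fin.last q) := by
      intro j
      have h : Fin.last (q + 1) = j.castSucc.succAbove (Fin.last q) := by
        rw [Fin.succAbove_of_le_castSucc _ _
          (Fin.castSucc_le_castSucc_iff.2 (Fin.le_last j)), Fin.succ_last]
      rw [h, Fin.insertNth_apply_succAbove]
    have hrestL : (fun r : Fin (q + 1) =>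
        (Fin.insertNth (α := fun _ => Ω[A⁄k]) (Fin.last (q + 1)) dw ω) r.castSucc) = ω := by
      funext r
      rw [← Fin.succAbove_last_apply, Fin.insertNth_apply_succAbove]
    have hlastL : (Fin.insertNth (α := fun _ => Ω[A⁄k]) (Fin.last (q + 1)) dw ω)
          (Fin.last (q + 1)) = dw :=
      Fin.insertNth_apply_same _ _ _
    have hmB : m (q + 1) (B (q + 1) ((tprod A ω) ⊗ₜ[A] ξ))
        = B q (m q ((tprod A ω) ⊗ₜ[A] ξ))
          + ((-1 : A) ^ (q + 1)) • μ ξ • ((tprod A ω) ⊗ₜ[A] ι dw) := by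
      rw [hB, map_sum]
      simp only [LinearMap.map_smul, hm]
      rw [Fin.sum_univ_castSucc]
      congr 1
      · rw [hB, Finset.smul_sum]
        refine Finset.sum_congr rfl fun j _ => ?_
        rw [hrest j, hlast j, Fin.coe_castSucc, smul_comm]
      · rw [hrestL, hlastL, Fin.val_last]
    rw [hmB, add_sub_cancel_left, smul_smul, ← pow_add]
    have hev : (-1 : A) ^ (q + 1 + (q + 1)) = 1 := by
      rw [← two_mul, pow_mul]; norm_num
    rw [hev, one_smul, hfin]
end
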